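/- Let M be a maximal independent set of the Kneser graph on chambers of PG(3,q). For every incident line-plane pair (l, π), the number of chambers of M containing both l and π is 0, 1, or q+1. -/

import Mathlib

open Submodule

/-- A chamber of `PG(3,q)`: a mutually incident point-line-plane triple,
where points, lines and planes are the 1-, 2- and 3-dimensional subspaces
of a 4-dimensional vector space over `F = GF(q)`. -/
structure Chamber (F : Type) [Field F] where
  pt : Submodule F (Fin 4 → F)
  line : Submodule F (Fin 4 → F)
  plane : Submodule F (Fin 4 → F)
  pt_rank : Module.finrank F pt = 1
  line_rank : Module.finrank F line = 2
  plane_rank : Module.finrank F plane = 3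
  pt_le_line : pt ≤ line
  line_le_plane : line ≤ plane

/-- Two chambers are opposite if each point lies outside the other's plane
and the two lines are skew (intersect trivially). -/
def Chamber.Opp {F : Type} [Field F] (c d : Chamber F) : Prop :=
  ¬ c.pt ≤ d.plane ∧ ¬ d.pt ≤ c.plane ∧ c.line ⊓ d.line = ⊥

/-- An independent set of the Kneser graph on chambers: pairwise non-opposite chambers. -/
def IsIndep {F : Type} [Field F] (M : Set (Chamber F)) : Prop :=
  ∀ c ∈ M, ∀ d ∈ M, ¬ c.Opp d

/-- A maximal independent set of the Kneser graph on chambers. -/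
def IsMaxIndep {F : Type} [Field F] (M : Set (Chamber F)) : Prop :=
  IsIndep M ∧ ∀ c : Chamber F, (∀ d ∈ M, ¬ c.Opp d) → c ∈ M

/-- The `M`-weight of a line `l`: the number of chambers of `M` whose line is `l`. -/
noncomputable def wLine {F : Type} [Field F] (M : Set (Chamber F))
    (l : Submodule F (Fin 4 → F)) : ℕ :=
  {c ∈ M | c.line = l}.ncard

/-- The `M`-weight of an incident line-plane pair. -/
noncomputable def wPair {F : Type} [Field F] (M : Set (Chamber F))
    (l π : Submodule F (Fin 4 → F)) : ℕ :=
  {c ∈ M | c.line = l ∧ c.plane = π}.ncard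

/-- The `M`-weight of an incident point-line pair. -/
noncomputable def wPt {F : Type} [Field F] (M : Set (Chamber F))
    (P l : Submodule F (Fin 4 → F)) : ℕ :=
  {c ∈ M | c.pt = P ∧ c.line = l}.ncard

/-- A `π`-line of `M`: a line of weight `≠ (q+1)^2` lying in a plane `π` such that
the pair `(l, π)` has weight `q+1`. -/
def IsPiLine {F : Type} [Field F] [Fintype F] (M : Set (Chamber F))
    (l : Submodule F (Fin 4 → F)) : Prop :=
  Module.finrank F l = 2 ∧ wLine M l ≠ (Fintype.card F + 1)^2 ∧
    ∃ π : Submodule F (Fin 4 → F), Module.finrank F π = 3 ∧ l ≤ π ∧ wPair M l π = Fintype.card F + 1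

/-- A `P`-line of `M`: a line of weight `≠ (q+1)^2` through a point `P` such that
the pair `(P, l)` has weight `q+1`. -/
def IsPLine {F : Type} [Field F] [Fintype F] (M : Set (Chamber F))
    (l : Submodule F (Fin 4 → F)) : Prop :=
  Module.finrank F l = 2 ∧ wLine M l ≠ (Fintype.card F + 1)^2 ∧
    ∃ P : Submodule F (Fin 4 → F), Module.finrank F P = 1 ∧ P ≤ l ∧ wPt M P l = Fintype.card F + 1


section Aux

open Module

variable {F : Type} [Field F]

lemma Chamber.ext' {c d : Chamber F} (h1 : c.pt = d.pt) (h2 : c.line = d.line)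
    (h3 : c.plane = d.plane) : c = d := by
  cases c; cases d; simp_all

lemma sup_eq_of_ne {P Q l : Submodule F (Fin 4 → F)}
    (hP : finrank F P = 1) (hQ : finrank F Q = 1) (hl : finrank F l = 2)
    (hPl : P ≤ l) (hQl : Q ≤ l) (hne : P ≠ Q) : P ⊔ Q = l := by
  have hinf : P ⊓ Q = ⊥ := by
    by_contra h
    have h1 : finrank F (P ⊓ Q : Submodule F (Fin 4 → F)) ≠ 0 := by
      simpa [Submodule.finrank_eq_zero] using h
    have h2 : finrank F (P ⊓ Q : Submodule F (Fin 4 → F)) ≤ 1 :=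
      hP ▸ Submodule.finrank_mono inf_le_left
    have h3 : P ⊓ Q = P := eq_of_le_of_finrank_eq inf_le_left (by omega)
    have h4 : P ≤ Q := h3 ▸ inf_le_right
    exact hne (eq_of_le_of_finrank_eq h4 (hP.trans hQ.symm))
  have hsum := Submodule.finrank_sup_add_finrank_inf_eq P Q
  rw [hinf, finrank_bot] at hsum
  exact eq_of_le_of_finrank_eq (sup_le hPl hQl) (by omega)

lemma not_skew_in_plane {l m W : Submodule F (Fin 4 → F)}
    (hl : finrank F l = 2) (hm : finrank F m = 2) (hW : finrank F W = 3)
    (hlW : l ≤ W) (hmW : m ≤ W) : l ⊓ m ≠ ⊥ := by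
  intro h
  have hsum := Submodule.finrank_sup_add_finrank_inf_eq l m
  rw [h, finrank_bot] at hsum
  have : finrank F (l ⊔ m : Submodule F (Fin 4 → F)) ≤ 3 :=
    hW ▸ Submodule.finrank_mono (sup_le hlW hmW)
  omega

/-- Counting: the number of points on a line is `q + 1`. -/
lemma card_points_on_line [Fintype F] {l : Submodule F (Fin 4 → F)}
    (hl : finrank F l = 2) :
    Nat.card {P : Submodule F (Fin 4 → F) // finrank F P = 1 ∧ P ≤ l}
      = Fintype.card F + 1 := by
  classical
  have e0 : ↥l ≃ₗ[F] (Fin 2 → F) := by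
    apply LinearEquiv.ofFinrankEq
    rw [hl, Module.finrank_fin_fun]
  have E1 : {P : Submodule F (Fin 4 → F) // finrank F P = 1 ∧ P ≤ l}
      ≃ {Q : Submodule F ↥l // finrank F Q = 1} :=
  { toFun := fun P => ⟨P.1.comap l.subtype, by
      have h := Submodule.finrank_map_subtype_eq l (P.1.comap l.subtype)
      rw [Submodule.map_comap_subtype, inf_of_le_right P.2.2, P.2.1] at h
      exact h.symm⟩
    invFun := fun Q => ⟨Q.1.map l.subtype, by simp [Q.2], Submodule.map_subtype_le _ _⟩
    left_inv := fun P => by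
      ext1
      show Submodule.map l.subtype (Submodule.comap l.subtype P.1) = P.1
      rw [Submodule.map_comap_subtype, inf_of_le_right P.2.2]
    right_inv := fun Q => by
      ext1
      exact Submodule.comap_map_eq_of_injective Subtype.val_injective Q.1 }
  have E2 : {Q : Submodule F ↥l // finrank F Q = 1}
      ≃ {Q : Submodule F (Fin 2 → F) // finrank F Q = 1} :=
    (Submodule.orderIsoMapComap e0).toEquiv.subtypeEquiv (fun Q => by
      have h0 : (Submodule.orderIsoMapComap e0).toEquiv Q
          = Submodule.map (e0 : ↥l →ₗ[F] Fin 2 → F) Q := rfl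
      rw [h0, LinearEquiv.finrank_map_eq])
  have E3 : {Q : Submodule F (Fin 2 → F) // finrank F Q = 1} ≃ Projectivization F (Fin 2 → F) :=
    (Projectivization.equivSubmodule F (Fin 2 → F)).symm
  have E4 : Projectivization F (Fin 2 → F) ≃ OnePoint F := (OnePoint.equivProjectivization F).symm
  have E5 : OnePoint F ≃ Option F := Equiv.refl _
  rw [Nat.card_congr ((((E1.trans E2).trans E3).trans E4).trans E5), Finite.card_option,
    Nat.card_eq_fintype_card]

end Aux

/-- The `M`-weight of an incident line-plane pair is `0`, `1` or `q+1`. -/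
theorem pair_weight_cases {F : Type} [Field F] [Fintype F] {q : ℕ}
    (hq : Fintype.card F = q)
    (M : Set (Chamber F)) (hM : IsMaxIndep M)
    (l π : Submodule F (Fin 4 → F)) (hl : Module.finrank F l = 2)
    (hπ : Module.finrank F π = 3) (hlπ : l ≤ π) :
    wPair M l π = 0 ∨ wPair M l π = 1 ∨ wPair M l π = q + 1 := by
  classical
  set S : Set (Chamber F) := {c ∈ M | c.line = l ∧ c.plane = π} with hS
  have hwS : wPair M l π = S.ncard := rfl
  by_cases hex : ∃ c ∈ S, ∃ d ∈ S, c ≠ d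
  · -- the main case: the weight is q + 1
    obtain ⟨c, hc, d, hd, hcd⟩ := hex
    obtain ⟨hcM, hcl, hcπ⟩ := hc
    obtain ⟨hdM, hdl, hdπ⟩ := hd
    have hpt : c.pt ≠ d.pt := fun h => hcd (Chamber.ext' h (hcl.trans hdl.symm) (hcπ.trans hdπ.symm))
    have hsup : c.pt ⊔ d.pt = l :=
      sup_eq_of_ne c.pt_rank d.pt_rank hl (hcl ▸ c.pt_le_line) (hdl ▸ d.pt_le_line) hpt
    -- every point on l gives a chamber of M
    have hmem : ∀ (P : Submodule F (Fin 4 → F)) (hP : Module.finrank F P = 1) (hPl : P ≤ l),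
        (⟨P, l, π, hP, hl, hπ, hPl, hlπ⟩ : Chamber F) ∈ M := by
      intro P hP hPl
      apply hM.2
      intro f hf hopp
      obtain ⟨h1, h2, h3⟩ := hopp
      simp only at h1 h2 h3
      have hnotboth : ¬ (c.pt ≤ f.plane ∧ d.pt ≤ f.plane) := by
        rintro ⟨ha, hb⟩
        have hlf : l ≤ f.plane := hsup ▸ sup_le ha hb
        exact not_skew_in_plane hl f.line_rank f.plane_rank hlf f.line_le_plane h3
      rcases not_and_or.mp hnotboth with h | h
      · exact hM.1 c hcM f hf ⟨h, hcπ ▸ h2, hcl ▸ h3⟩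
      · exact hM.1 d hdM f hf ⟨h, hdπ ▸ h2, hdl ▸ h3⟩
    -- S is in bijection with the points of l
    have ES : S ≃ {P : Submodule F (Fin 4 → F) // Module.finrank F P = 1 ∧ P ≤ l} :=
    { toFun := fun c => ⟨c.1.pt, c.1.pt_rank, c.2.2.1 ▸ c.1.pt_le_line⟩
      invFun := fun P => ⟨⟨P.1, l, π, P.2.1, hl, hπ, P.2.2, hlπ⟩,
        hmem P.1 P.2.1 P.2.2, rfl, rfl⟩
      left_inv := fun c => by
        apply Subtype.ext
        exact (Chamber.ext' rfl c.2.2.1.symm c.2.2.2.symm)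
      right_inv := fun P => rfl }
    right; right
    rw [hwS, ← Nat.card_coe_set_eq, Nat.card_congr ES, card_points_on_line hl, hq]
  · -- S has at most one element
    push_neg at hex
    have hsub : S.Subsingleton := fun a ha b hb => by
      by_contra hne
      exact hne (hex a ha b hb)
    have : S.ncard ≤ 1 := by
      rcases Set.Subsingleton.eq_empty_or_singleton hsub with h | ⟨x, h⟩
      · simp [h]
      · simp [h]
    rw [hwS]
    rcases Nat.le_one_iff_eq_zero_or_eq_one.mp this with h | h
    · left; exact h
    · right; left; exact h
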